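/- Let L = X ⋉_φ N be the external semidirect product of partial groups. Then the maps α: X → (X,1), y ↦ (y,1) and β: N → (1,N), m ↦ (1,m) are isomorphisms of partial groups, where (X,1) = {(y,1) : y ∈ X} and (1,N) = {(1,m) : m ∈ N} carry the partial group structure restricted from L. -/

import Mathlib

universe u v

/-- A partial group: a set `L` with a domain `D ⊆ W(L)` of words, a (total extension of the)
partial product `Pi`, and an involutory inversion, satisfying axioms (PG1)-(PG4).
The value of `Pi` outside `D` is irrelevant. -/
structure PartialGroup (L : Type u) : Type u where
  D : Set (List L)
  Pi : List L → L
  inv : L → L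
  inv_inv : ∀ g, inv (inv g) = g
  singleton_mem : ∀ g, [g] ∈ D
  append_left_mem : ∀ {u v : List L}, u ++ v ∈ D → u ∈ D
  append_right_mem : ∀ {u v : List L}, u ++ v ∈ D → v ∈ D
  Pi_singleton : ∀ g, Pi [g] = g
  pg3_mem : ∀ u v w : List L, u ++ v ++ w ∈ D → u ++ [Pi v] ++ w ∈ D
  pg3_eq : ∀ u v w : List L, u ++ v ++ w ∈ D → Pi (u ++ v ++ w) = Pi (u ++ [Pi v] ++ w)
  pg4_mem : ∀ w ∈ D, (List.map inv w).reverse ++ w ∈ D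
  pg4_eq : ∀ w ∈ D, Pi ((List.map inv w).reverse ++ w) = Pi []

namespace PartialGroup

variable {L : Type u} {L' : Type v}

/-- Inversion of a word: `(g_1,...,g_k)⁻¹ = (g_k⁻¹,...,g_1⁻¹)`. -/
def wInv (P : PartialGroup L) (w : List L) : List L := (w.map P.inv).reverse

/-- The identity `1 = Π(∅)`. -/
def one (P : PartialGroup L) : L := P.Pi []

/-- Conjugation `x^g = Π(g⁻¹, x, g)`. -/
def cnj (P : PartialGroup L) (g x : L) : L := P.Pi [P.inv g, x, g]

/-- `x ∈ D(g)`, i.e. `(g⁻¹, x, g) ∈ D(L)`. -/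
def memD (P : PartialGroup L) (g x : L) : Prop := [P.inv g, x, g] ∈ P.D

/-- `H` is a partial subgroup of `L`. -/
def IsPartialSubgroup (P : PartialGroup L) (H : Set L) : Prop :=
  H.Nonempty ∧ (∀ g ∈ H, P.inv g ∈ H) ∧ ∀ w ∈ P.D, (∀ x ∈ w, x ∈ H) → P.Pi w ∈ H

/-- `N` is a partial normal subgroup of `L`. -/
def IsPartialNormal (P : PartialGroup L) (N : Set L) : Prop :=
  P.IsPartialSubgroup N ∧ ∀ g : L, ∀ n ∈ N, P.memD g n → P.cnj g n ∈ N

/-- `H` is a subgroup of `L`: a partial subgroup with `W(H) ⊆ D(L)`. -/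
def IsSubgroup (P : PartialGroup L) (H : Set L) : Prop :=
  P.IsPartialSubgroup H ∧ ∀ w : List L, (∀ x ∈ w, x ∈ H) → w ∈ P.D

/-- Homomorphism of partial groups. -/
def IsHom (P : PartialGroup L) (P' : PartialGroup L') (φ : L → L') : Prop :=
  ∀ w ∈ P.D, w.map φ ∈ P'.D ∧ φ (P.Pi w) = P'.Pi (w.map φ)

/-- Isomorphism of partial groups: a bijective homomorphism with `D(L)^φ = D(L')`. -/
def IsIso (P : PartialGroup L) (P' : PartialGroup L') (φ : L → L') : Prop :=
  Function.Bijective φ ∧ P.IsHom P' φ ∧ List.map φ '' P.D = P'.D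

end PartialGroup

open PartialGroup

/-- A partial group `X` acts on a partial group `N` via `a : X → N → N`: each `a x` is an
automorphism of `N`, and `x ↦ a x` is a homomorphism of partial groups from `X` to `Aut(N)`
(the latter carrying the full domain; products in `Aut(N)` are composed left-to-right,
matching the exponential notation `n^{c₁c₂} = (n^{c₁})^{c₂}`). -/
def IsAction {X : Type u} {N : Type v} (PX : PartialGroup X) (PN : PartialGroup N)
    (a : X → N → N) : Prop :=
  (∀ x, PN.IsIso PN (a x)) ∧
    ∀ w ∈ PX.D, ∀ n, a (PX.Pi w) n = w.foldl (fun m x => a x m) n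

/-- For `w = ((x₁,f₁),...,(xₙ,fₙ))`, the word
`w_N = (f₁^{(x₂⋯xₙ)^φ}, f₂^{(x₃⋯xₙ)^φ}, ..., fₙ)`. -/
def sdN {X : Type u} {N : Type v} (PX : PartialGroup X) (a : X → N → N) :
    List (X × N) → List N
  | [] => []
  | q :: rest => a (PX.Pi (rest.map Prod.fst)) q.2 :: sdN PX a rest

/-- `PL` is the external semidirect product `X ⋉_a N`: underlying set `X × N`,
domain `{w : w_X ∈ D(X) ∧ w_N ∈ D(N)}`, product `Π(w) = (Π_X(w_X), Π_N(w_N))`,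
inversion `(x,f)⁻¹ = (x⁻¹, (f⁻¹)^{(x⁻¹)^φ})`. -/
def IsExtSemidirect {X : Type u} {N : Type v} (PX : PartialGroup X) (PN : PartialGroup N)
    (a : X → N → N) (PL : PartialGroup (X × N)) : Prop :=
  PL.D = {w | w.map Prod.fst ∈ PX.D ∧ sdN PX a w ∈ PN.D} ∧
  (∀ w ∈ PL.D, PL.Pi w = (PX.Pi (w.map Prod.fst), PN.Pi (sdN PX a w))) ∧
  ∀ p : X × N, PL.inv p = (PX.inv p.1, a (PX.inv p.1) (PN.inv p.2))


section Aux
variable {L : Type u} {L' : Type v} {X : Type u} {N : Type v}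

lemma nil_mem_D (P : PartialGroup L) : ([] : List L) ∈ P.D := by
  have := P.singleton_mem (P.Pi [])
  exact P.append_left_mem (u := []) (v := [P.Pi []]) this

lemma replicate_one_mem (P : PartialGroup L) (n : ℕ) :
    List.replicate n P.one ∈ P.D := by
  induction n with
  | zero => exact nil_mem_D P
  | succ k ih =>
    have h := P.pg3_mem (List.replicate k P.one) [] [] (by simpa using ih)
    simpa [PartialGroup.one, List.replicate_succ'] using h

lemma Pi_replicate_one (P : PartialGroup L) (n : ℕ) :
    P.Pi (List.replicate n P.one) = P.one := by
  induction n with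
  | zero => rfl
  | succ k ih =>
    have h := P.pg3_eq (List.replicate k P.one) [] []
      (by simpa using replicate_one_mem P k)
    have h' : P.Pi (List.replicate k P.one) =
        P.Pi (List.replicate k P.one ++ [P.one]) := by
      simpa [PartialGroup.one] using h
    rw [List.replicate_succ', ← h', ih]

lemma a_one (PX : PartialGroup X) (PN : PartialGroup N)
    (a : X → N → N) (ha : IsAction PX PN a) (x : X) :
    a x PN.one = PN.one := by
  have h := (ha.1 x).2.1 [] (nil_mem_D PN)
  simpa [PartialGroup.one] using h.2

lemma aone_id (PX : PartialGroup X) (PN : PartialGroup N)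
    (a : X → N → N) (ha : IsAction PX PN a) (n : N) :
    a PX.one n = n := by
  have h := ha.2 [] (nil_mem_D PX) n
  simpa [PartialGroup.one] using h

lemma aPireplicate (PX : PartialGroup X) (PN : PartialGroup N)
    (a : X → N → N) (ha : IsAction PX PN a) (k : ℕ) (n : N) :
    a (PX.Pi (List.replicate k PX.one)) n = n := by
  have h := ha.2 (List.replicate k PX.one) (replicate_one_mem PX k) n
  rw [h]
  clear h
  induction k generalizing n with
  | zero => rfl
  | succ j ih =>
    rw [List.replicate_succ, List.foldl_cons, aone_id PX PN a ha]
    exact ih n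

lemma sdN_alpha (PX : PartialGroup X) (PN : PartialGroup N)
    (a : X → N → N) (ha : IsAction PX PN a) (w : List X) :
    sdN PX a (w.map (fun x => ((x, PN.one) : X × N))) =
      List.replicate w.length PN.one := by
  induction w with
  | nil => rfl
  | cons x t ih =>
    simp only [List.map_cons, sdN, ih, List.length_cons, List.replicate_succ,
      a_one PX PN a ha]

lemma mapfst_beta (PX : PartialGroup X) (w : List N) :
    (w.map (fun m => ((PX.one, m) : X × N))).map Prod.fst =
      List.replicate w.length PX.one := by
  induction w with
  | nil => rfl
  | cons m t ih => simp [List.replicate_succ, ih]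

lemma sdN_beta (PX : PartialGroup X) (PN : PartialGroup N)
    (a : X → N → N) (ha : IsAction PX PN a) (w : List N) :
    sdN PX a (w.map (fun m => ((PX.one, m) : X × N))) = w := by
  induction w with
  | nil => rfl
  | cons m t ih =>
    simp only [List.map_cons, sdN, ih]
    congr 1
    have hfst := mapfst_beta PX (X := X) t
    rw [show (t.map fun m => ((PX.one, m) : X × N)).map Prod.fst
        = List.replicate t.length PX.one from hfst]
    exact aPireplicate PX PN a ha t.length m

end Aux

theorem stmt9 {X : Type u} {N : Type v} (PX : PartialGroup X) (PN : PartialGroup N)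
    (a : X → N → N) (ha : IsAction PX PN a)
    (PL : PartialGroup (X × N)) (hL : IsExtSemidirect PX PN a PL) :
    (Function.Injective (fun x : X => ((x, PN.one) : X × N)) ∧
      (∀ w : List X, w ∈ PX.D ↔ w.map (fun x => ((x, PN.one) : X × N)) ∈ PL.D) ∧
      (∀ w ∈ PX.D,
        PL.Pi (w.map (fun x => ((x, PN.one) : X × N))) = (PX.Pi w, PN.one))) ∧
    (Function.Injective (fun m : N => ((PX.one, m) : X × N)) ∧
      (∀ w : List N, w ∈ PN.D ↔ w.map (fun m => ((PX.one, m) : X × N)) ∈ PL.D) ∧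
      (∀ w ∈ PN.D,
        PL.Pi (w.map (fun m => ((PX.one, m) : X × N))) = (PX.one, PN.Pi w))) := by
  obtain ⟨hD, hPi, hinv⟩ := hL
  have hmapfst : ∀ w : List X,
      (w.map (fun x => ((x, PN.one) : X × N))).map Prod.fst = w := by
    intro w
    rw [List.map_map]
    exact List.map_id'' (fun _ => rfl) w
  refine ⟨⟨?_, ?_, ?_⟩, ⟨?_, ?_, ?_⟩⟩
  · intro x y h
    exact congrArg Prod.fst h
  · intro w
    rw [hD]
    constructor
    · intro hw
      refine ⟨by rw [hmapfst]; exact hw, ?_⟩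
      rw [sdN_alpha PX PN a ha]
      exact replicate_one_mem PN _
    · intro hw
      have := hw.1
      rwa [hmapfst] at this
  · intro w hw
    have hmem : w.map (fun x => ((x, PN.one) : X × N)) ∈ PL.D := by
      rw [hD]
      exact ⟨by rw [hmapfst]; exact hw, by
        rw [sdN_alpha PX PN a ha]; exact replicate_one_mem PN _⟩
    rw [hPi _ hmem, hmapfst, sdN_alpha PX PN a ha, Pi_replicate_one]
  · intro m m' h
    exact congrArg Prod.snd h
  · intro w
    rw [hD]
    constructor
    · intro hw
      refine ⟨?_, ?_⟩
      · rw [mapfst_beta]; exact replicate_one_mem PX _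
      · rw [sdN_beta PX PN a ha]; exact hw
    · intro hw
      have := hw.2
      rwa [sdN_beta PX PN a ha] at this
  · intro w hw
    have hmem : w.map (fun m => ((PX.one, m) : X × N)) ∈ PL.D := by
      rw [hD]
      exact ⟨by rw [mapfst_beta]; exact replicate_one_mem PX _,
        by rw [sdN_beta PX PN a ha]; exact hw⟩
    rw [hPi _ hmem, mapfst_beta, sdN_beta PX PN a ha, Pi_replicate_one]
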